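/- Suppose that L(r) > 0 for all r > 0, that L has lower Matuszewska index at zero strictly bigger than −p (i.e., there exist a > −p and A, R₀ > 0 with L(r₂) ≥ A (r₂/r₁)^a L(r₁) whenever 0 < r₁ < r₂ < R₀), and that L has lower Matuszewska index at infinity strictly bigger than −p (i.e., there exist a' > −p and A', R₀' > 0 with L(r₂) ≥ A' (r₂/r₁)^{a'} L(r₁) whenever R₀' < r₁ < r₂). Then there exist constants c₁, c₂ > 0 such that c₁ L(r) ≤ h_p(r) ≤ c₂ L(r) for all r > 0. -/

import Mathlib

open MeasureTheory ENNReal Set Filter Topology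

/-- The concentration function `h_p(r) = ∫ min(1, |x|^p/r^p) ν(dx)`. -/
noncomputable def hpFun (d : ℕ) (p : ℝ) (ν : Measure (EuclideanSpace ℝ (Fin d))) (r : ℝ) :
    ℝ≥0∞ :=
  ∫⁻ x, ENNReal.ofReal (min 1 (‖x‖ ^ p / r ^ p)) ∂ν

/-- The tail function `L(r) = ν({x : |x| > r})`. -/
noncomputable def LFun (d : ℕ) (ν : Measure (EuclideanSpace ℝ (Fin d))) (r : ℝ) : ℝ≥0∞ :=
  ν {x | r < ‖x‖}

lemma hmul_aux {c : ℝ} (hc : 0 < c) {X Y : ℝ≥0∞} (h : ENNReal.ofReal c * X ≤ Y) :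
    X ≤ ENNReal.ofReal c⁻¹ * Y := by
  have : X = ENNReal.ofReal c⁻¹ * (ENNReal.ofReal c * X) := by
    rw [← mul_assoc, ← ENNReal.ofReal_mul (by positivity), inv_mul_cancel₀ hc.ne',
      ENNReal.ofReal_one, one_mul]
  rw [this]
  exact mul_le_mul_right h _

lemma pow_calc (p α : ℝ) (k : ℕ) :
    (((2:ℝ)⁻¹ ^ k) ^ p) * (((2:ℝ) ^ (k+1)) ^ α)⁻¹
      = (2:ℝ) ^ (-α) * ((2:ℝ) ^ (-(p+α))) ^ k := by
  have h2 : (0:ℝ) < 2 := by norm_num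
  rw [← Real.rpow_natCast ((2:ℝ)⁻¹) k, ← Real.rpow_natCast (2:ℝ) (k+1),
    ← Real.rpow_natCast ((2:ℝ) ^ (-(p+α))) k,
    ← Real.rpow_neg_one (2:ℝ)]
  rw [← Real.rpow_mul h2.le, ← Real.rpow_mul h2.le, ← Real.rpow_mul h2.le,
    ← Real.rpow_neg (by positivity), ← Real.rpow_add h2]
  rw [← Real.rpow_mul h2.le, ← Real.rpow_add h2]
  congr 1
  push_cast
  ring

lemma tsum_geom_bound (c t : ℝ) (hc : 0 ≤ c) (ht0 : 0 ≤ t) (ht1 : t < 1) (X : ℝ≥0∞)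
    (g : ℕ → ℝ≥0∞) (hg : ∀ k, g k ≤ ENNReal.ofReal (c * t ^ k) * X) :
    ∑' k, g k ≤ ENNReal.ofReal (c * (1 - t)⁻¹) * X := by
  calc ∑' k, g k ≤ ∑' k, ENNReal.ofReal (c * t ^ k) * X := ENNReal.tsum_le_tsum hg
    _ = (∑' k, ENNReal.ofReal (c * t ^ k)) * X := ENNReal.tsum_mul_right
    _ = ENNReal.ofReal (∑' k : ℕ, c * t ^ k) * X := by
        rw [ENNReal.ofReal_tsum_of_nonneg (fun k => by positivity)
          ((summable_geometric_of_lt_one ht0 ht1).mul_left c)]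
    _ = _ := by rw [tsum_mul_left, tsum_geometric_of_lt_one ht0 ht1]

lemma annuli_bound {α : Type*} [NormedAddCommGroup α] [MeasurableSpace α]
    (ν : Measure α) (p r ρ : ℝ) (hp0 : 0 < p) (hr : 0 < r) (hρ : 0 ≤ ρ) :
    ∫⁻ x in {x | ρ < ‖x‖ ∧ ‖x‖ ≤ r}, ENNReal.ofReal (‖x‖ ^ p / r ^ p) ∂ν
      ≤ ∑' k : ℕ, ENNReal.ofReal (((2:ℝ)⁻¹ ^ k) ^ p) *
          ν ({x | r * (2:ℝ)⁻¹ ^ (k+1) < ‖x‖ ∧ ‖x‖ ≤ r * (2:ℝ)⁻¹ ^ k} ∩ {x | ρ < ‖x‖}) := by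
  classical
  set q : ℝ := (2:ℝ)⁻¹ with hqdef
  have hq0 : 0 < q := by norm_num [hqdef]
  have hq1 : q < 1 := by norm_num [hqdef]
  have cover : {x : α | ρ < ‖x‖ ∧ ‖x‖ ≤ r} ⊆
      ⋃ k : ℕ, ({x | r * q ^ (k+1) < ‖x‖ ∧ ‖x‖ ≤ r * q ^ k} ∩ {x | ρ < ‖x‖}) := by
    rintro x ⟨h1, h2⟩
    have hx0 : 0 < ‖x‖ := lt_of_le_of_lt hρ h1
    have hex : ∃ k : ℕ, r * q ^ (k+1) < ‖x‖ := by
      obtain ⟨n, hn⟩ := exists_pow_lt_of_lt_one (div_pos hx0 hr) hq1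
      refine ⟨n, ?_⟩
      have h3 : q ^ (n+1) ≤ q ^ n := pow_le_pow_of_le_one hq0.le hq1.le (by omega)
      have h4 := h3.trans_lt hn
      calc r * q ^ (n+1) < r * (‖x‖ / r) := mul_lt_mul_of_pos_left h4 hr
        _ = ‖x‖ := by field_simp
    refine mem_iUnion.mpr ⟨Nat.find hex, ⟨⟨Nat.find_spec hex, ?_⟩, h1⟩⟩
    rcases Nat.eq_zero_or_pos (Nat.find hex) with h0 | hpos
    · rw [h0]; simpa using h2
    · have hm := Nat.find_min hex (Nat.sub_lt hpos one_pos)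
      push_neg at hm
      have heq : Nat.find hex - 1 + 1 = Nat.find hex := Nat.succ_pred_eq_of_pos hpos
      rwa [heq] at hm
  calc ∫⁻ x in {x | ρ < ‖x‖ ∧ ‖x‖ ≤ r}, ENNReal.ofReal (‖x‖ ^ p / r ^ p) ∂ν
      ≤ ∫⁻ x in ⋃ k : ℕ, ({x | r * q ^ (k+1) < ‖x‖ ∧ ‖x‖ ≤ r * q ^ k} ∩ {x | ρ < ‖x‖}),
          ENNReal.ofReal (‖x‖ ^ p / r ^ p) ∂ν := lintegral_mono_set cover
    _ ≤ ∑' k : ℕ, ∫⁻ x in ({x | r * q ^ (k+1) < ‖x‖ ∧ ‖x‖ ≤ r * q ^ k} ∩ {x | ρ < ‖x‖}),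
          ENNReal.ofReal (‖x‖ ^ p / r ^ p) ∂ν := lintegral_iUnion_le _ _
    _ ≤ _ := by
        refine ENNReal.tsum_le_tsum fun k => ?_
        have hb : ∀ x : α, x ∈ ({x | r * q ^ (k+1) < ‖x‖ ∧ ‖x‖ ≤ r * q ^ k} ∩ {x : α | ρ < ‖x‖}) →
            ENNReal.ofReal (‖x‖ ^ p / r ^ p) ≤ ENNReal.ofReal ((q ^ k) ^ p) := by
          rintro x ⟨⟨-, hle⟩, -⟩
          refine ENNReal.ofReal_le_ofReal ?_
          rw [div_le_iff₀ (Real.rpow_pos_of_pos hr p)]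
          calc ‖x‖ ^ p ≤ (r * q ^ k) ^ p :=
                Real.rpow_le_rpow (norm_nonneg x) hle hp0.le
            _ = (q ^ k) ^ p * r ^ p := by
                rw [Real.mul_rpow hr.le (by positivity), mul_comm]
        calc ∫⁻ x in ({x | r * q ^ (k+1) < ‖x‖ ∧ ‖x‖ ≤ r * q ^ k} ∩ {x | ρ < ‖x‖}),
              ENNReal.ofReal (‖x‖ ^ p / r ^ p) ∂ν
            ≤ ∫⁻ _ in ({x | r * q ^ (k+1) < ‖x‖ ∧ ‖x‖ ≤ r * q ^ k} ∩ {x | ρ < ‖x‖}),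
              ENNReal.ofReal ((q ^ k) ^ p) ∂ν := setLIntegral_mono measurable_const hb
          _ = _ := by rw [setLIntegral_const]


lemma mid_helper {X Y : ℝ≥0∞} (hX : X ≠ ⊤) (hY0 : Y ≠ 0) (hYt : Y ≠ ⊤) :
    X = ENNReal.ofReal (X.toReal * Y.toReal⁻¹) * Y := by
  rw [ENNReal.ofReal_mul ENNReal.toReal_nonneg, ENNReal.ofReal_toReal hX,
    ENNReal.ofReal_inv_of_pos (ENNReal.toReal_pos hY0 hYt), ENNReal.ofReal_toReal hYt,
    mul_assoc, ENNReal.inv_mul_cancel hY0 hYt, mul_one]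

lemma piece1_helper {p α ρ r : ℝ} (hρ : 0 < ρ) (hρr : ρ ≤ r) (hα : -p ≤ α) :
    r ^ (-p) ≤ ρ ^ (-p) * (r / ρ) ^ α := by
  have h1r : (1:ℝ) ≤ r / ρ := (one_le_div hρ).mpr hρr
  have hr0 : 0 < r := lt_of_lt_of_le hρ hρr
  calc r ^ (-p) = ρ ^ (-p) * (r / ρ) ^ (-p) := by
        rw [Real.div_rpow hr0.le hρ.le]
        field_simp
    _ ≤ ρ ^ (-p) * (r / ρ) ^ α := mul_le_mul_of_nonneg_left
        (Real.rpow_le_rpow_of_exponent_le h1r hα) (Real.rpow_nonneg hρ.le _)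

/-- If `L > 0` and `L` has lower Matuszewska indices at zero and at infinity
strictly bigger than `-p`, then `h_p(r) ≈ L(r)` for all `r > 0`. -/
theorem statement_1 (d : ℕ) (hd : 1 ≤ d) (p : ℝ) (hp1 : 1 ≤ p)
    (ν : Measure (EuclideanSpace ℝ (Fin d)))
    (hint : ∫⁻ x, ENNReal.ofReal (min 1 (‖x‖ ^ p)) ∂ν < ⊤)
    (hLpos : ∀ r : ℝ, 0 < r → 0 < LFun d ν r)
    (a A R₀ : ℝ) (ha : -p < a) (hA : 0 < A) (hR₀ : 0 < R₀)
    (hMat : ∀ r₁ r₂ : ℝ, 0 < r₁ → r₁ < r₂ → r₂ < R₀ →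
      ENNReal.ofReal (A * (r₂ / r₁) ^ a) * LFun d ν r₁ ≤ LFun d ν r₂)
    (a' A' R₀' : ℝ) (ha' : -p < a') (hA' : 0 < A') (hR₀' : 0 < R₀')
    (hMat' : ∀ r₁ r₂ : ℝ, R₀' < r₁ → r₁ < r₂ →
      ENNReal.ofReal (A' * (r₂ / r₁) ^ a') * LFun d ν r₁ ≤ LFun d ν r₂) :
    ∃ c₁ > (0 : ℝ), ∃ c₂ > (0 : ℝ), ∀ r : ℝ, 0 < r →
      ENNReal.ofReal c₁ * LFun d ν r ≤ hpFun d p ν r ∧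
      hpFun d p ν r ≤ ENNReal.ofReal c₂ * LFun d ν r := by
  classical
  have hp0 : 0 < p := lt_of_lt_of_le one_pos hp1
  set M := ∫⁻ x, ENNReal.ofReal (min 1 (‖x‖ ^ p)) ∂ν with hMdef
  have hMne : M ≠ ⊤ := hint.ne
  -- measurability facts
  have meas1 : Measurable fun x : EuclideanSpace ℝ (Fin d) => ENNReal.ofReal (min 1 (‖x‖ ^ p)) :=
    (ENNReal.continuous_ofReal.comp (continuous_const.min
      (continuous_norm.rpow_const fun x => Or.inr hp0.le))).measurable
  have measg : ∀ r : ℝ,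
      Measurable fun x : EuclideanSpace ℝ (Fin d) => ENNReal.ofReal (‖x‖ ^ p / r ^ p) := fun r =>
    (ENNReal.continuous_ofReal.comp
      ((continuous_norm.rpow_const fun x => Or.inr hp0.le).div_const _)).measurable
  have meas2 : ∀ r : ℝ,
      Measurable fun x : EuclideanSpace ℝ (Fin d) =>
        ENNReal.ofReal (min 1 (‖x‖ ^ p / r ^ p)) := fun r =>
    (ENNReal.continuous_ofReal.comp (continuous_const.min
      ((continuous_norm.rpow_const fun x => Or.inr hp0.le).div_const _))).measurable
  have hSmeas : ∀ r : ℝ, MeasurableSet {x : EuclideanSpace ℝ (Fin d) | r < ‖x‖} := fun r =>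
    measurableSet_lt measurable_const measurable_norm
  -- L is antitone
  have L_anti : ∀ s t : ℝ, s ≤ t → LFun d ν t ≤ LFun d ν s := fun s t hst =>
    measure_mono fun x hx => lt_of_le_of_lt hst hx
  -- L is finite on (0, ∞)
  have L_top : ∀ s : ℝ, 0 < s → LFun d ν s < ⊤ := by
    intro s hs
    have hc : 0 < min 1 (s ^ p) := lt_min one_pos (Real.rpow_pos_of_pos hs p)
    have h1 : ENNReal.ofReal (min 1 (s ^ p)) * LFun d ν s ≤ M := by
      rw [show LFun d ν s = ν {x : EuclideanSpace ℝ (Fin d) | s < ‖x‖} from rfl,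
        ← setLIntegral_const {x : EuclideanSpace ℝ (Fin d) | s < ‖x‖}]
      calc ∫⁻ _ in {x : EuclideanSpace ℝ (Fin d) | s < ‖x‖},
            ENNReal.ofReal (min 1 (s ^ p)) ∂ν
          ≤ ∫⁻ x in {x : EuclideanSpace ℝ (Fin d) | s < ‖x‖},
            ENNReal.ofReal (min 1 (‖x‖ ^ p)) ∂ν := by
            refine setLIntegral_mono meas1 fun x hx => ?_
            exact ENNReal.ofReal_le_ofReal (min_le_min le_rfl
              (Real.rpow_le_rpow hs.le (le_of_lt hx) hp0.le))
        _ ≤ M := setLIntegral_le_lintegral _ _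
    calc LFun d ν s ≤ ENNReal.ofReal (min 1 (s ^ p))⁻¹ * M := hmul_aux hc h1
      _ < ⊤ := ENNReal.mul_lt_top ENNReal.ofReal_lt_top hint
  -- lower bound : L r ≤ hp r
  have lower : ∀ r : ℝ, 0 < r → LFun d ν r ≤ hpFun d p ν r := by
    intro r hr
    calc LFun d ν r = ∫⁻ _ in {x : EuclideanSpace ℝ (Fin d) | r < ‖x‖}, 1 ∂ν :=
          (setLIntegral_one _).symm
      _ ≤ ∫⁻ x in {x : EuclideanSpace ℝ (Fin d) | r < ‖x‖},
            ENNReal.ofReal (min 1 (‖x‖ ^ p / r ^ p)) ∂ν := by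
          refine setLIntegral_mono (meas2 r) fun x hx => ?_
          have hX : (1:ℝ) ≤ ‖x‖ ^ p / r ^ p :=
            (one_le_div (Real.rpow_pos_of_pos hr p)).mpr
              (Real.rpow_le_rpow hr.le (le_of_lt hx) hp0.le)
          simp [min_eq_left hX]
      _ ≤ hpFun d p ν r := setLIntegral_le_lintegral _ _
  -- hp is finite on (0, ∞)
  have hp_top : ∀ s : ℝ, 0 < s → hpFun d p ν s < ⊤ := by
    intro s hs
    have hpt : ∀ x : EuclideanSpace ℝ (Fin d),
        ENNReal.ofReal (min 1 (‖x‖ ^ p / s ^ p)) ≤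
          ENNReal.ofReal (max 1 (s ^ (-p))) * ENNReal.ofReal (min 1 (‖x‖ ^ p)) := by
      intro x
      rw [← ENNReal.ofReal_mul (le_max_of_le_left zero_le_one)]
      refine ENNReal.ofReal_le_ofReal ?_
      rcases le_total (‖x‖) 1 with hx1 | hx1
      · have hmin : min 1 (‖x‖ ^ p) = ‖x‖ ^ p :=
          min_eq_right (Real.rpow_le_one (norm_nonneg x) hx1 hp0.le)
        rw [hmin]
        calc min 1 (‖x‖ ^ p / s ^ p) ≤ ‖x‖ ^ p / s ^ p := min_le_right _ _
          _ = s ^ (-p) * ‖x‖ ^ p := by rw [Real.rpow_neg hs.le]; ring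
          _ ≤ max 1 (s ^ (-p)) * ‖x‖ ^ p :=
            mul_le_mul_of_nonneg_right (le_max_right _ _) (Real.rpow_nonneg (norm_nonneg x) p)
      · have hmin : min 1 (‖x‖ ^ p) = 1 := by
          refine min_eq_left ?_
          have := Real.rpow_le_rpow zero_le_one hx1 hp0.le
          simpa using this
        rw [hmin, mul_one]
        exact le_trans (min_le_left _ _) (le_max_left _ _)
    calc hpFun d p ν s ≤ ∫⁻ x, ENNReal.ofReal (max 1 (s ^ (-p))) *
          ENNReal.ofReal (min 1 (‖x‖ ^ p)) ∂ν := lintegral_mono hpt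
      _ = ENNReal.ofReal (max 1 (s ^ (-p))) * M :=
          lintegral_const_mul' _ _ ENNReal.ofReal_ne_top
      _ < ⊤ := ENNReal.mul_lt_top ENNReal.ofReal_lt_top hint
  -- decomposition upper bound
  have hdecomp : ∀ r : ℝ, 0 < r → hpFun d p ν r ≤ LFun d ν r +
      ∫⁻ x in {x : EuclideanSpace ℝ (Fin d) | ‖x‖ ≤ r},
        ENNReal.ofReal (‖x‖ ^ p / r ^ p) ∂ν := by
    intro r hr
    rw [show hpFun d p ν r = ∫⁻ x, ENNReal.ofReal (min 1 (‖x‖ ^ p / r ^ p)) ∂ν from rfl,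
      ← lintegral_add_compl _ (hSmeas r)]
    refine add_le_add ?_ ?_
    · calc ∫⁻ x in {x : EuclideanSpace ℝ (Fin d) | r < ‖x‖},
            ENNReal.ofReal (min 1 (‖x‖ ^ p / r ^ p)) ∂ν
          ≤ ∫⁻ _ in {x : EuclideanSpace ℝ (Fin d) | r < ‖x‖}, 1 ∂ν := by
            refine lintegral_mono fun x => ?_
            calc ENNReal.ofReal (min 1 (‖x‖ ^ p / r ^ p)) ≤ ENNReal.ofReal 1 :=
                  ENNReal.ofReal_le_ofReal (min_le_left _ _)
              _ = 1 := ENNReal.ofReal_one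
        _ = LFun d ν r := setLIntegral_one _
    · have hcompl : {x : EuclideanSpace ℝ (Fin d) | r < ‖x‖}ᶜ =
          {x : EuclideanSpace ℝ (Fin d) | ‖x‖ ≤ r} := by
        ext x; simp [not_lt]
      rw [hcompl]
      exact lintegral_mono fun x => ENNReal.ofReal_le_ofReal (min_le_right _ _)
  -- key termwise bound
  have hkey : ∀ (B α r : ℝ) (k : ℕ) (C : Set (EuclideanSpace ℝ (Fin d))), 0 < B → 0 < r →
      (ENNReal.ofReal (B * ((2:ℝ) ^ (k+1)) ^ α) * LFun d ν (r * (2:ℝ)⁻¹ ^ (k+1)) ≤ LFun d ν r) →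
      ENNReal.ofReal (((2:ℝ)⁻¹ ^ k) ^ p) *
        ν ({x | r * (2:ℝ)⁻¹ ^ (k+1) < ‖x‖ ∧ ‖x‖ ≤ r * (2:ℝ)⁻¹ ^ k} ∩ C)
        ≤ ENNReal.ofReal (B⁻¹ * (2:ℝ) ^ (-α) * ((2:ℝ) ^ (-(p+α))) ^ k) * LFun d ν r := by
    intro B α r k C hB hr hMk
    have hBpos : 0 < B * ((2:ℝ) ^ (k+1)) ^ α := by positivity
    have h1 : ν ({x | r * (2:ℝ)⁻¹ ^ (k+1) < ‖x‖ ∧ ‖x‖ ≤ r * (2:ℝ)⁻¹ ^ k} ∩ C)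
        ≤ LFun d ν (r * (2:ℝ)⁻¹ ^ (k+1)) :=
      measure_mono fun x hx => hx.1.1
    have h2 := h1.trans (hmul_aux hBpos hMk)
    calc ENNReal.ofReal (((2:ℝ)⁻¹ ^ k) ^ p) *
          ν ({x | r * (2:ℝ)⁻¹ ^ (k+1) < ‖x‖ ∧ ‖x‖ ≤ r * (2:ℝ)⁻¹ ^ k} ∩ C)
        ≤ ENNReal.ofReal (((2:ℝ)⁻¹ ^ k) ^ p) *
          (ENNReal.ofReal (B * ((2:ℝ) ^ (k+1)) ^ α)⁻¹ * LFun d ν r) := mul_le_mul_right h2 _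
      _ = ENNReal.ofReal ((((2:ℝ)⁻¹ ^ k) ^ p) * (B * ((2:ℝ) ^ (k+1)) ^ α)⁻¹) * LFun d ν r := by
          rw [← mul_assoc, ← ENNReal.ofReal_mul (by positivity)]
      _ = _ := by
          congr 2
          rw [mul_inv, mul_comm B⁻¹ ((((2:ℝ) ^ (k+1)) ^ α)⁻¹), ← mul_assoc, pow_calc p α k]
          ring
    -- constants
  have hts : (0:ℝ) ≤ (2:ℝ) ^ (-(p+a)) := by positivity
  have hts1 : (2:ℝ) ^ (-(p+a)) < 1 :=
    Real.rpow_lt_one_of_one_lt_of_neg one_lt_two (by linarith)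
  have hts' : (0:ℝ) ≤ (2:ℝ) ^ (-(p+a')) := by positivity
  have hts1' : (2:ℝ) ^ (-(p+a')) < 1 :=
    Real.rpow_lt_one_of_one_lt_of_neg one_lt_two (by linarith)
  have hρpos : (0:ℝ) < 2*R₀' := by linarith
  have hrmaxpos : (0:ℝ) < 2*R₀' + R₀ := by linarith
  set Cs : ℝ := A⁻¹ * (2:ℝ) ^ (-a) * (1 - (2:ℝ) ^ (-(p+a)))⁻¹ with hCsdef
  set Cs' : ℝ := A'⁻¹ * (2:ℝ) ^ (-a') * (1 - (2:ℝ) ^ (-(p+a')))⁻¹ with hCs'def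
  have hCs : 0 ≤ Cs := by
    rw [hCsdef]
    exact mul_nonneg (mul_nonneg (inv_nonneg.mpr hA.le)
      (Real.rpow_nonneg (by norm_num) _)) (inv_nonneg.mpr (by linarith))
  have hCs'nn : 0 ≤ Cs' := by
    rw [hCs'def]
    exact mul_nonneg (mul_nonneg (inv_nonneg.mpr hA'.le)
      (Real.rpow_nonneg (by norm_num) _)) (inv_nonneg.mpr (by linarith))
  have hℓpos : 0 < (LFun d ν (2*R₀')).toReal :=
    ENNReal.toReal_pos (hLpos _ hρpos).ne' (L_top _ hρpos).ne
  set CL1 : ℝ := max 1 ((2*R₀') ^ p) * M.toReal * (2*R₀') ^ (-p) *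
      (A' * (LFun d ν (2*R₀')).toReal)⁻¹ with hCL1def
  have hKnn : (0:ℝ) ≤ max 1 ((2*R₀') ^ p) := le_trans zero_le_one (le_max_left _ _)
  have hCL1nn : 0 ≤ CL1 := by
    rw [hCL1def]
    exact mul_nonneg (mul_nonneg (mul_nonneg hKnn ENNReal.toReal_nonneg)
      (Real.rpow_nonneg hρpos.le _)) (inv_nonneg.mpr (mul_nonneg hA'.le hℓpos.le))
  set Cmid : ℝ := (hpFun d p ν R₀).toReal * ((LFun d ν (2*R₀' + R₀)).toReal)⁻¹ with hCmiddef
  have hCmidnn : 0 ≤ Cmid := by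
    rw [hCmiddef]
    exact mul_nonneg ENNReal.toReal_nonneg (inv_nonneg.mpr ENNReal.toReal_nonneg)
  refine ⟨1, one_pos, 1 + Cs + Cs' + CL1 + Cmid, by linarith, fun r hr => ⟨?_, ?_⟩⟩
  · rw [ENNReal.ofReal_one, one_mul]; exact lower r hr
  have hfinal : ∀ u : ℝ, 0 ≤ u → u ≤ Cs + Cs' + CL1 + Cmid →
      hpFun d p ν r ≤ ENNReal.ofReal (1 + u) * LFun d ν r →
      hpFun d p ν r ≤ ENNReal.ofReal (1 + Cs + Cs' + CL1 + Cmid) * LFun d ν r := by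
    intro u hu hu2 h
    exact h.trans (mul_le_mul_left (ENNReal.ofReal_le_ofReal (by linarith)) _)
  have hdiv : ∀ k : ℕ, r / (r * (2:ℝ)⁻¹ ^ (k+1)) = (2:ℝ) ^ (k+1) := by
    intro k
    have hq : ((2:ℝ)) ^ (k+1) * (2:ℝ)⁻¹ ^ (k+1) = 1 := by
      rw [← mul_pow]; norm_num
    rw [div_eq_iff (ne_of_gt (by positivity : (0:ℝ) < r * (2:ℝ)⁻¹ ^ (k+1))),
      mul_left_comm, hq, mul_one]
  have hrlt : ∀ k : ℕ, r * (2:ℝ)⁻¹ ^ (k+1) < r := by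
    intro k
    have h5 : (2:ℝ)⁻¹ ^ (k+1) ≤ 2⁻¹ := by
      calc (2:ℝ)⁻¹ ^ (k+1) ≤ (2:ℝ)⁻¹ ^ 1 :=
            pow_le_pow_of_le_one (by norm_num) (by norm_num) (by omega)
        _ = 2⁻¹ := pow_one _
    nlinarith
  rcases lt_or_ge r R₀ with hsmall | h1
  · -- small case
    refine hfinal Cs hCs (by linarith) ?_
    have hterm : ∀ k : ℕ, ENNReal.ofReal (((2:ℝ)⁻¹ ^ k) ^ p) *
        ν ({x | r * (2:ℝ)⁻¹ ^ (k+1) < ‖x‖ ∧ ‖x‖ ≤ r * (2:ℝ)⁻¹ ^ k} ∩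
            {x : EuclideanSpace ℝ (Fin d) | (0:ℝ) < ‖x‖})
        ≤ ENNReal.ofReal (A⁻¹ * (2:ℝ) ^ (-a) * ((2:ℝ) ^ (-(p+a))) ^ k) * LFun d ν r := by
      intro k
      have hr1 : 0 < r * (2:ℝ)⁻¹ ^ (k+1) := by positivity
      have hMk := hMat _ r hr1 (hrlt k) hsmall
      rw [hdiv k] at hMk
      exact hkey A a r k _ hA hr hMk
    have hzmeas : MeasurableSet {x : EuclideanSpace ℝ (Fin d) | ‖x‖ = 0} :=
      (isClosed_eq continuous_norm continuous_const).measurableSet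
    have hzero : ∫⁻ x in {x : EuclideanSpace ℝ (Fin d) | ‖x‖ = 0},
        ENNReal.ofReal (‖x‖ ^ p / r ^ p) ∂ν = 0 := by
      rw [lintegral_eq_zero_iff (measg r)]
      refine (ae_restrict_iff' hzmeas).mpr (ae_of_all _ fun x hx => ?_)
      have hx0 : ‖x‖ = 0 := hx
      simp [hx0, Real.zero_rpow hp0.ne']
    have hsub : {x : EuclideanSpace ℝ (Fin d) | ‖x‖ ≤ r} ⊆
        {x : EuclideanSpace ℝ (Fin d) | ‖x‖ = 0} ∪
          {x : EuclideanSpace ℝ (Fin d) | (0:ℝ) < ‖x‖ ∧ ‖x‖ ≤ r} := by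
      intro x hx
      rcases (norm_nonneg x).lt_or_eq with h | h
      · exact Or.inr ⟨h, hx⟩
      · exact Or.inl h.symm
    have hmain : ∫⁻ x in {x : EuclideanSpace ℝ (Fin d) | ‖x‖ ≤ r},
        ENNReal.ofReal (‖x‖ ^ p / r ^ p) ∂ν ≤ ENNReal.ofReal Cs * LFun d ν r := by
      rw [hCsdef]
      calc ∫⁻ x in {x : EuclideanSpace ℝ (Fin d) | ‖x‖ ≤ r},
            ENNReal.ofReal (‖x‖ ^ p / r ^ p) ∂ν
          ≤ ∫⁻ x in ({x : EuclideanSpace ℝ (Fin d) | ‖x‖ = 0} ∪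
              {x : EuclideanSpace ℝ (Fin d) | (0:ℝ) < ‖x‖ ∧ ‖x‖ ≤ r}),
            ENNReal.ofReal (‖x‖ ^ p / r ^ p) ∂ν := lintegral_mono_set hsub
        _ ≤ (∫⁻ x in {x : EuclideanSpace ℝ (Fin d) | ‖x‖ = 0},
              ENNReal.ofReal (‖x‖ ^ p / r ^ p) ∂ν) +
            ∫⁻ x in {x : EuclideanSpace ℝ (Fin d) | (0:ℝ) < ‖x‖ ∧ ‖x‖ ≤ r},
              ENNReal.ofReal (‖x‖ ^ p / r ^ p) ∂ν := lintegral_union_le _ _ _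
        _ = ∫⁻ x in {x : EuclideanSpace ℝ (Fin d) | (0:ℝ) < ‖x‖ ∧ ‖x‖ ≤ r},
              ENNReal.ofReal (‖x‖ ^ p / r ^ p) ∂ν := by rw [hzero, zero_add]
        _ ≤ ∑' k : ℕ, ENNReal.ofReal (((2:ℝ)⁻¹ ^ k) ^ p) *
              ν ({x | r * (2:ℝ)⁻¹ ^ (k+1) < ‖x‖ ∧ ‖x‖ ≤ r * (2:ℝ)⁻¹ ^ k} ∩
                {x : EuclideanSpace ℝ (Fin d) | (0:ℝ) < ‖x‖}) :=
            annuli_bound ν p r 0 hp0 hr le_rfl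
        _ ≤ ENNReal.ofReal (A⁻¹ * (2:ℝ) ^ (-a) * (1 - (2:ℝ) ^ (-(p+a)))⁻¹) * LFun d ν r :=
            tsum_geom_bound _ _ (mul_nonneg (inv_nonneg.mpr hA.le)
              (Real.rpow_nonneg (by norm_num) _)) hts hts1 _ _ hterm
    calc hpFun d p ν r ≤ LFun d ν r + ∫⁻ x in {x : EuclideanSpace ℝ (Fin d) | ‖x‖ ≤ r},
          ENNReal.ofReal (‖x‖ ^ p / r ^ p) ∂ν := hdecomp r hr
      _ ≤ LFun d ν r + ENNReal.ofReal Cs * LFun d ν r := add_le_add le_rfl hmain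
      _ = ENNReal.ofReal (1 + Cs) * LFun d ν r := by
          rw [ENNReal.ofReal_add zero_le_one hCs, add_mul, ENNReal.ofReal_one, one_mul]
  rcases le_or_gt r (2*R₀' + R₀) with hmid | hbig
  · -- middle case
    refine hfinal Cmid hCmidnn (by linarith) ?_
    have h2 : hpFun d p ν r ≤ hpFun d p ν R₀ := by
      refine lintegral_mono fun x => ENNReal.ofReal_le_ofReal (min_le_min le_rfl ?_)
      have hle : R₀ ^ p ≤ r ^ p := Real.rpow_le_rpow hR₀.le h1 hp0.le
      rw [div_le_div_iff₀ (Real.rpow_pos_of_pos hr p) (Real.rpow_pos_of_pos hR₀ p)]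
      exact mul_le_mul_of_nonneg_left hle (Real.rpow_nonneg (norm_nonneg x) p)
    have h3 : hpFun d p ν R₀ = ENNReal.ofReal Cmid * LFun d ν (2*R₀' + R₀) := by
      rw [hCmiddef]
      exact mid_helper (hp_top R₀ hR₀).ne (hLpos _ hrmaxpos).ne' (L_top _ hrmaxpos).ne
    calc hpFun d p ν r ≤ hpFun d p ν R₀ := h2
      _ = ENNReal.ofReal Cmid * LFun d ν (2*R₀' + R₀) := h3
      _ ≤ ENNReal.ofReal Cmid * LFun d ν r := mul_le_mul_right (L_anti r _ hmid) _
      _ ≤ ENNReal.ofReal (1 + Cmid) * LFun d ν r :=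
          mul_le_mul_left (ENNReal.ofReal_le_ofReal (by linarith)) _
  · -- large case
    have hρr : 2*R₀' < r := by linarith
    refine hfinal (CL1 + Cs') (by linarith) (by linarith) ?_
    -- piece 1
    have hpt1 : ∀ x ∈ {x : EuclideanSpace ℝ (Fin d) | ‖x‖ ≤ 2*R₀'},
        ENNReal.ofReal (‖x‖ ^ p / r ^ p) ≤
          ENNReal.ofReal (max 1 ((2*R₀') ^ p) * r ^ (-p)) * ENNReal.ofReal (min 1 (‖x‖ ^ p)) := by
      intro x hx
      rw [← ENNReal.ofReal_mul (mul_nonneg hKnn (Real.rpow_nonneg hr.le _))]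
      refine ENNReal.ofReal_le_ofReal ?_
      have hxρ : ‖x‖ ≤ 2*R₀' := hx
      have key : ‖x‖ ^ p ≤ max 1 ((2*R₀') ^ p) * min 1 (‖x‖ ^ p) := by
        rcases le_total (‖x‖) 1 with hx1 | hx1
        · rw [min_eq_right (Real.rpow_le_one (norm_nonneg x) hx1 hp0.le)]
          exact le_mul_of_one_le_left (Real.rpow_nonneg (norm_nonneg x) p) (le_max_left _ _)
        · rw [min_eq_left (by simpa using Real.rpow_le_rpow zero_le_one hx1 hp0.le), mul_one]
          exact le_trans (Real.rpow_le_rpow (norm_nonneg x) hxρ hp0.le) (le_max_right _ _)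
      calc ‖x‖ ^ p / r ^ p = ‖x‖ ^ p * r ^ (-p) := by
            rw [Real.rpow_neg hr.le, div_eq_mul_inv]
        _ ≤ (max 1 ((2*R₀') ^ p) * min 1 (‖x‖ ^ p)) * r ^ (-p) :=
            mul_le_mul_of_nonneg_right key (Real.rpow_nonneg hr.le _)
        _ = max 1 ((2*R₀') ^ p) * r ^ (-p) * min 1 (‖x‖ ^ p) := by ring
    have hpiece1 : ∫⁻ x in {x : EuclideanSpace ℝ (Fin d) | ‖x‖ ≤ 2*R₀'},
        ENNReal.ofReal (‖x‖ ^ p / r ^ p) ∂ν ≤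
        ENNReal.ofReal (max 1 ((2*R₀') ^ p) * r ^ (-p)) * M := by
      calc ∫⁻ x in {x : EuclideanSpace ℝ (Fin d) | ‖x‖ ≤ 2*R₀'},
            ENNReal.ofReal (‖x‖ ^ p / r ^ p) ∂ν
          ≤ ∫⁻ x in {x : EuclideanSpace ℝ (Fin d) | ‖x‖ ≤ 2*R₀'},
            ENNReal.ofReal (max 1 ((2*R₀') ^ p) * r ^ (-p)) *
              ENNReal.ofReal (min 1 (‖x‖ ^ p)) ∂ν :=
            setLIntegral_mono (meas1.const_mul _) hpt1
        _ ≤ ∫⁻ x, ENNReal.ofReal (max 1 ((2*R₀') ^ p) * r ^ (-p)) *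
              ENNReal.ofReal (min 1 (‖x‖ ^ p)) ∂ν := setLIntegral_le_lintegral _ _
        _ = ENNReal.ofReal (max 1 ((2*R₀') ^ p) * r ^ (-p)) * M :=
            lintegral_const_mul' _ _ ENNReal.ofReal_ne_top
    have hMineq := hMat' (2*R₀') r (by linarith) hρr
    have hreal : max 1 ((2*R₀') ^ p) * r ^ (-p) * M.toReal ≤
        CL1 * (A' * (r / (2*R₀')) ^ a' * (LFun d ν (2*R₀')).toReal) := by
      rw [hCL1def]
      have h6 := piece1_helper hρpos hρr.le (le_of_lt ha')
      have heq : max 1 ((2*R₀') ^ p) * M.toReal * (2*R₀') ^ (-p) *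
            (A' * (LFun d ν (2*R₀')).toReal)⁻¹ *
            (A' * (r / (2*R₀')) ^ a' * (LFun d ν (2*R₀')).toReal) =
          max 1 ((2*R₀') ^ p) * M.toReal * ((2*R₀') ^ (-p) * (r / (2*R₀')) ^ a') := by
        field_simp
      rw [heq]
      calc max 1 ((2*R₀') ^ p) * r ^ (-p) * M.toReal
          = max 1 ((2*R₀') ^ p) * M.toReal * r ^ (-p) := by ring
        _ ≤ max 1 ((2*R₀') ^ p) * M.toReal * ((2*R₀') ^ (-p) * (r / (2*R₀')) ^ a') :=
            mul_le_mul_of_nonneg_left h6 (mul_nonneg hKnn ENNReal.toReal_nonneg)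
    have hpiece1' : ENNReal.ofReal (max 1 ((2*R₀') ^ p) * r ^ (-p)) * M ≤
        ENNReal.ofReal CL1 * LFun d ν r := by
      calc ENNReal.ofReal (max 1 ((2*R₀') ^ p) * r ^ (-p)) * M
          = ENNReal.ofReal (max 1 ((2*R₀') ^ p) * r ^ (-p) * M.toReal) := by
            rw [ENNReal.ofReal_mul (mul_nonneg hKnn (Real.rpow_nonneg hr.le _)),
              ENNReal.ofReal_toReal hMne]
        _ ≤ ENNReal.ofReal (CL1 * (A' * (r / (2*R₀')) ^ a' * (LFun d ν (2*R₀')).toReal)) :=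
            ENNReal.ofReal_le_ofReal hreal
        _ = ENNReal.ofReal CL1 * (ENNReal.ofReal (A' * (r / (2*R₀')) ^ a') *
              LFun d ν (2*R₀')) := by
            rw [ENNReal.ofReal_mul hCL1nn,
              ENNReal.ofReal_mul (mul_nonneg hA'.le (Real.rpow_nonneg (by positivity) _)),
              ENNReal.ofReal_toReal (L_top _ hρpos).ne]
        _ ≤ ENNReal.ofReal CL1 * LFun d ν r := mul_le_mul_right hMineq _
    -- piece 2
    have hterm' : ∀ k : ℕ, ENNReal.ofReal (((2:ℝ)⁻¹ ^ k) ^ p) *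
        ν ({x | r * (2:ℝ)⁻¹ ^ (k+1) < ‖x‖ ∧ ‖x‖ ≤ r * (2:ℝ)⁻¹ ^ k} ∩
            {x : EuclideanSpace ℝ (Fin d) | 2*R₀' < ‖x‖})
        ≤ ENNReal.ofReal (A'⁻¹ * (2:ℝ) ^ (-a') * ((2:ℝ) ^ (-(p+a'))) ^ k) * LFun d ν r := by
      intro k
      rcases le_or_gt (r * (2:ℝ)⁻¹ ^ k) (2*R₀') with hk | hk
      · have hempty : ({x | r * (2:ℝ)⁻¹ ^ (k+1) < ‖x‖ ∧ ‖x‖ ≤ r * (2:ℝ)⁻¹ ^ k} ∩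
            {x : EuclideanSpace ℝ (Fin d) | 2*R₀' < ‖x‖}) = ∅ := by
          refine eq_empty_iff_forall_notMem.mpr ?_
          rintro x ⟨⟨-, h2⟩, h3⟩
          simp only [mem_setOf_eq] at h3
          linarith
        rw [hempty, measure_empty, mul_zero]
        exact zero_le
      · have hr1' : R₀' < r * (2:ℝ)⁻¹ ^ (k+1) := by
          have h7 : r * (2:ℝ)⁻¹ ^ (k+1) = (r * (2:ℝ)⁻¹ ^ k) * 2⁻¹ := by ring
          rw [h7]; linarith
        have hMk := hMat' _ r hr1' (hrlt k)
        rw [hdiv k] at hMk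
        exact hkey A' a' r k _ hA' hr hMk
    have hpiece2 : ∫⁻ x in {x : EuclideanSpace ℝ (Fin d) | 2*R₀' < ‖x‖ ∧ ‖x‖ ≤ r},
        ENNReal.ofReal (‖x‖ ^ p / r ^ p) ∂ν ≤ ENNReal.ofReal Cs' * LFun d ν r := by
      rw [hCs'def]
      exact (annuli_bound ν p r (2*R₀') hp0 hr hρpos.le).trans
        (tsum_geom_bound _ _ (mul_nonneg (inv_nonneg.mpr hA'.le)
          (Real.rpow_nonneg (by norm_num) _)) hts' hts1' _ _ hterm')
    have hsub : {x : EuclideanSpace ℝ (Fin d) | ‖x‖ ≤ r} ⊆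
        {x : EuclideanSpace ℝ (Fin d) | ‖x‖ ≤ 2*R₀'} ∪
          {x : EuclideanSpace ℝ (Fin d) | 2*R₀' < ‖x‖ ∧ ‖x‖ ≤ r} := by
      intro x hx
      rcases le_or_gt (‖x‖) (2*R₀') with h | h
      · exact Or.inl h
      · exact Or.inr ⟨h, hx⟩
    calc hpFun d p ν r ≤ LFun d ν r + ∫⁻ x in {x : EuclideanSpace ℝ (Fin d) | ‖x‖ ≤ r},
          ENNReal.ofReal (‖x‖ ^ p / r ^ p) ∂ν := hdecomp r hr
      _ ≤ LFun d ν r + ((∫⁻ x in {x : EuclideanSpace ℝ (Fin d) | ‖x‖ ≤ 2*R₀'},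
            ENNReal.ofReal (‖x‖ ^ p / r ^ p) ∂ν) +
          ∫⁻ x in {x : EuclideanSpace ℝ (Fin d) | 2*R₀' < ‖x‖ ∧ ‖x‖ ≤ r},
            ENNReal.ofReal (‖x‖ ^ p / r ^ p) ∂ν) :=
          add_le_add le_rfl ((lintegral_mono_set hsub).trans (lintegral_union_le _ _ _))
      _ ≤ LFun d ν r + (ENNReal.ofReal CL1 * LFun d ν r + ENNReal.ofReal Cs' * LFun d ν r) :=
          add_le_add le_rfl (add_le_add (hpiece1.trans hpiece1') hpiece2)
      _ = ENNReal.ofReal (1 + (CL1 + Cs')) * LFun d ν r := by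
          rw [ENNReal.ofReal_add zero_le_one (by linarith),
            ENNReal.ofReal_add hCL1nn hCs'nn, add_mul, add_mul, ENNReal.ofReal_one, one_mul]
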